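/- Comparing the factorial-series expansion 1/(x-α) = Σ_{s≥1} α^{[s-1]_h} x^{-[s]_h} with the geometric expansion 1/(x-α) = Σ_{k≥0} α^k x^{-(k+1)} and the expansions 1/x^k = Σ_s ψ_{k,s}^{(h)} x^{-[s]_h} yields, for every s ≥ 1: Σ_{k≥1} ψ_{k,s}^{(h)} · α^{k-1} = α^{[s-1]_h} = α(α+h)···(α+(s-2)h). -/

import Mathlib

open Filter Finset

/-- `∏_{k<s} (x + k h)` -/
noncomputable def fscP (h x : ℝ) (s : ℕ) : ℝ := ∏ k ∈ Finset.range s, (x + k * h)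

/-- coefficients of the rising factorial `∏_{m<j} (α + m h)` -/
noncomputable def fscE (h : ℝ) : ℕ → ℕ → ℝ
  | 0, 0 => 1
  | 0, _ + 1 => 0
  | j + 1, 0 => j * h * fscE h j 0
  | j + 1, k + 1 => fscE h j k + j * h * fscE h j (k + 1)

lemma fscE_nonneg (h : ℝ) (hh : 0 ≤ h) : ∀ j k, 0 ≤ fscE h j k := by
  intro j
  induction j with
  | zero => intro k; cases k <;> simp [fscE]
  | succ j ih =>
    intro k
    cases k with
    | zero =>
      have := ih 0
      simp only [fscE]
      positivity
    | succ k =>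
      have h1 := ih k
      have h2 := ih (k + 1)
      simp only [fscE]
      positivity

lemma fscE_eq_zero (h : ℝ) : ∀ j k, j < k → fscE h j k = 0 := by
  intro j
  induction j with
  | zero => intro k hk; cases k with
    | zero => omega
    | succ k => simp [fscE]
  | succ j ih =>
    intro k hk
    cases k with
    | zero => omega
    | succ k =>
      have h1 : fscE h j k = 0 := ih k (by omega)
      have h2 : fscE h j (k + 1) = 0 := ih (k + 1) (by omega)
      simp [fscE, h1, h2]

lemma fscE_poly (h : ℝ) : ∀ j (α : ℝ),
    ∑ k ∈ range (j + 1), fscE h j k * α ^ k = ∏ m ∈ range j, (α + m * h) := by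
  intro j
  induction j with
  | zero => intro α; simp [fscE]
  | succ j ih =>
    intro α
    rw [Finset.sum_range_succ' (fun k => fscE h (j+1) k * α ^ k)]
    have e0 : fscE h (j+1) 0 * α ^ 0 = j * h * fscE h j 0 := by simp [fscE]
    have esum : ∑ k ∈ range (j+1), fscE h (j+1) (k+1) * α ^ (k+1)
        = ∑ k ∈ range (j+1), (fscE h j k * α ^ (k+1) + j * h * (fscE h j (k+1) * α ^ (k+1))) := by
      refine Finset.sum_congr rfl fun k _ => ?_
      simp only [fscE]; ring
    rw [e0, esum, Finset.sum_add_distrib]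
    have t1 : ∑ k ∈ range (j+1), fscE h j k * α ^ (k+1)
        = α * ∑ k ∈ range (j+1), fscE h j k * α ^ k := by
      rw [Finset.mul_sum]; refine Finset.sum_congr rfl fun k _ => by ring
    have t2 : ∑ k ∈ range (j+1), (j:ℝ) * h * (fscE h j (k+1) * α ^ (k+1))
        = j * h * ∑ k ∈ range (j+1), fscE h j (k+1) * α ^ (k+1) := by
      rw [Finset.mul_sum]
    have t3 : (j:ℝ) * h * fscE h j 0 + j * h * ∑ k ∈ range (j+1), fscE h j (k+1) * α ^ (k+1)
        = j * h * ∑ k ∈ range (j+2), fscE h j k * α ^ k := by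
      rw [Finset.sum_range_succ' (fun k => fscE h j k * α ^ k)]; simp; ring
    have t4 : ∑ k ∈ range (j+2), fscE h j k * α ^ k
        = ∑ k ∈ range (j+1), fscE h j k * α ^ k := by
      rw [Finset.sum_range_succ, fscE_eq_zero h j (j+1) (by omega)]; simp
    rw [t1, t2, show α * (∑ k ∈ range (j+1), fscE h j k * α ^ k)
          + (j:ℝ) * h * (∑ k ∈ range (j+1), fscE h j (k+1) * α ^ (k+1))
          + (j:ℝ) * h * fscE h j 0
        = α * ∑ k ∈ range (j+1), fscE h j k * α ^ k
          + ((j:ℝ) * h * fscE h j 0 + j * h * ∑ k ∈ range (j+1), fscE h j (k+1) * α ^ (k+1))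
        from by ring, t3, t4, ih α, Finset.prod_range_succ]
    ring
  

lemma fscP_pos (h x : ℝ) (hh : 0 ≤ h) (hx : 0 < x) (s : ℕ) : 0 < fscP h x s := by
  refine Finset.prod_pos fun k _ => ?_
  positivity

lemma fscP_succ (h x : ℝ) (s : ℕ) : fscP h x (s + 1) = fscP h x s * (x + s * h) :=
  Finset.prod_range_succ _ _

lemma fscP_shift (h x : ℝ) (s : ℕ) : fscP h x (s + 1) = x * fscP h (x + h) s := by
  rw [fscP, Finset.prod_range_succ' (fun k => (x + k * h))]
  simp only [Nat.cast_zero, zero_mul, add_zero, Nat.cast_add, Nat.cast_one]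
  rw [mul_comm]
  congr 1
  refine Finset.prod_congr rfl fun k _ => ?_
  push_cast; ring

/-- canonical coefficients of the factorial series of `1/x^n` -/
noncomputable def fscC (h : ℝ) (n s : ℕ) : ℝ := if s = 0 then 0 else fscE h (s - 1) (n - 1)

lemma fscE_sum_rec (h x : ℝ) (j n' : ℕ) :
    ∑ m ∈ range (n' + 1), fscE h (j + 1) m * x ^ m
      = (x + j * h) * ∑ m ∈ range (n' + 1), fscE h j m * x ^ m - fscE h j n' * x ^ (n' + 1) := by
  rw [Finset.sum_range_succ' (fun m => fscE h (j+1) m * x ^ m)]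
  have e0 : fscE h (j+1) 0 * x ^ 0 = (j : ℝ) * h * fscE h j 0 := by simp [fscE]
  have esum : ∑ k ∈ range n', fscE h (j+1) (k+1) * x ^ (k+1)
      = ∑ k ∈ range n', (fscE h j k * x ^ (k+1) + (j:ℝ) * h * (fscE h j (k+1) * x ^ (k+1))) := by
    refine Finset.sum_congr rfl fun k _ => ?_
    simp only [fscE]; ring
  rw [e0, esum, Finset.sum_add_distrib]
  have t1 : ∑ k ∈ range n', fscE h j k * x ^ (k+1)
      = x * ((∑ m ∈ range (n' + 1), fscE h j m * x ^ m) - fscE h j n' * x ^ n') := by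
    rw [Finset.sum_range_succ, add_sub_cancel_right, Finset.mul_sum]
    refine Finset.sum_congr rfl fun k _ => by ring
  have t2 : ∑ k ∈ range n', (j:ℝ) * h * (fscE h j (k+1) * x ^ (k+1))
      = (j:ℝ) * h * ((∑ m ∈ range (n' + 1), fscE h j m * x ^ m) - fscE h j 0 * x ^ 0) := by
    rw [Finset.sum_range_succ' (fun m => fscE h j m * x ^ m), add_sub_cancel_right, Finset.mul_sum]
  rw [t1, t2]
  ring

lemma fsc_partial (h x : ℝ) (hh : 0 ≤ h) (hx : 0 < x) (n : ℕ) (hn : 1 ≤ n) : ∀ j : ℕ,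
    ∑ s ∈ range (j + 1), fscC h n s / fscP h x s
      = (x ^ n)⁻¹ - (∑ m ∈ range n, fscE h j m * x ^ m) / (x ^ n * fscP h x j) := by
  intro j
  induction j with
  | zero =>
    have e1 : ∑ m ∈ range n, fscE h 0 m * x ^ m = 1 := by
      rw [Finset.sum_eq_single 0]
      · simp [fscE]
      · intro b _ hb
        match b, hb with
        | (k+1), _ => simp [fscE]
      · intro hb; exact absurd (Finset.mem_range.2 hn) hb
    simp [fscC, e1, fscP]
  | succ j ih =>
    rw [Finset.sum_range_succ, ih]
    have hPj := fscP_pos h x hh hx j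
    have hPj1 := fscP_pos h x hh hx (j + 1)
    have hxn : (0:ℝ) < x ^ n := by positivity
    obtain ⟨n', rfl⟩ : ∃ n', n = n' + 1 := ⟨n - 1, by omega⟩
    have key := fscE_sum_rec h x j n'
    have hC : fscC h (n' + 1) (j + 1) = fscE h j n' := by simp [fscC]
    rw [hC, fscP_succ h x j]
    have hxj : x + (j:ℝ) * h > 0 := by positivity
    field_simp
    rw [key]
    ring

lemma fsc_lim (a q b : ℕ → ℝ) (ha : ∀ j, 0 ≤ a j) (hq0 : ∀ j, 0 ≤ q j) (hq1 : ∀ j, q j ≤ 1)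
    (rec : ∀ j, a (j + 1) = q j * a j + (1 - q j) * b j)
    (hb : Tendsto b atTop (nhds 0))
    (hprod : ∀ J, Tendsto (fun j => ∏ i ∈ Finset.Ico J j, q i) atTop (nhds 0)) :
    Tendsto a atTop (nhds 0) := by
  rw [Metric.tendsto_atTop]
  intro ε hε
  have hε3 : 0 < ε / 3 := by linarith
  obtain ⟨J, hJ⟩ := (Metric.tendsto_atTop.1 hb) (ε / 3) hε3
  have hJb : ∀ j ≥ J, b j ≤ ε / 3 := by
    intro j hj
    have := hJ j hj
    rw [Real.dist_eq, sub_zero] at this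
    exact le_of_lt (lt_of_le_of_lt (le_abs_self _) this)
  have key : ∀ j, J ≤ j → a j ≤ ε / 3 + a J * ∏ i ∈ Finset.Ico J j, q i := by
    intro j hj
    induction j, hj using Nat.le_induction with
    | base => simp; linarith [hε3]
    | succ j hj ih =>
      rw [rec j, Finset.prod_Ico_succ_top hj]
      have h1 : q j * a j ≤ q j * (ε / 3 + a J * ∏ i ∈ Finset.Ico J j, q i) :=
        mul_le_mul_of_nonneg_left ih (hq0 j)
      have h2 : (1 - q j) * b j ≤ (1 - q j) * (ε / 3) :=
        mul_le_mul_of_nonneg_left (hJb j hj) (by linarith [hq1 j])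
      nlinarith [hq0 j, hq1 j]
  obtain ⟨N', hN'⟩ := (Metric.tendsto_atTop.1 ((hprod J).const_mul (a J))) (ε / 3) hε3
  refine ⟨max J N', fun j hj => ?_⟩
  have hj1 : J ≤ j := le_trans (le_max_left _ _) hj
  have hj2 : N' ≤ j := le_trans (le_max_right _ _) hj
  have := hN' j hj2
  rw [Real.dist_eq, mul_zero, sub_zero] at this
  have h3 : a J * ∏ i ∈ Finset.Ico J j, q i < ε / 3 := lt_of_le_of_lt (le_abs_self _) this
  rw [Real.dist_eq, sub_zero, abs_of_nonneg (ha j)]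
  have := key j hj1
  linarith

lemma fsc_harmonic (h x : ℝ) (hh : 0 < h) (hx : h ≤ x) :
    Tendsto (fun j => ∑ i ∈ range j, x / (x + i * h)) atTop atTop := by
  have hx0 : 0 < x := lt_of_lt_of_le hh hx
  refine tendsto_atTop_mono (fun j => ?_) Real.tendsto_sum_range_one_div_nat_succ_atTop
  refine Finset.sum_le_sum fun i _ => ?_
  have hd : (0:ℝ) < x + i * h := by positivity
  rw [div_le_div_iff₀ (by positivity) hd]
  have : (i:ℝ) * h ≤ i * x := by
    apply mul_le_mul_of_nonneg_left hx (by positivity)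
  nlinarith

lemma fsc_prod_tendsto (h x : ℝ) (hh : 0 < h) (hx : h ≤ x) (J : ℕ) :
    Tendsto (fun j => ∏ i ∈ Finset.Ico J j, (i * h / (x + i * h))) atTop (nhds 0) := by
  have hx0 : 0 < x := lt_of_lt_of_le hh hx
  have hd : ∀ i : ℕ, (0:ℝ) < x + i * h := fun i => by positivity
  have hq0 : ∀ i : ℕ, (0:ℝ) ≤ i * h / (x + i * h) := fun i => by positivity
  refine squeeze_zero (fun j => Finset.prod_nonneg fun i _ => hq0 i)
    (g := fun j => Real.exp (-(∑ i ∈ Finset.Ico J j, x / (x + i * h)))) (fun j => ?_) ?_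
  · calc ∏ i ∈ Finset.Ico J j, ((i:ℝ) * h / (x + i * h))
        ≤ ∏ i ∈ Finset.Ico J j, Real.exp (-(x / (x + i * h))) := by
          refine Finset.prod_le_prod (fun i _ => hq0 i) fun i _ => ?_
          have h1 : (i:ℝ) * h / (x + i * h) = -(x / (x + i * h)) + 1 := by
            field_simp
            ring
          rw [h1]
          exact Real.add_one_le_exp _
      _ = Real.exp (-(∑ i ∈ Finset.Ico J j, x / (x + i * h))) := by
          rw [← Real.exp_sum, Finset.sum_neg_distrib]
  · have hS : Tendsto (fun j => ∑ i ∈ Finset.Ico J j, x / (x + i * h)) atTop atTop := by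
      have h1 : Tendsto (fun j => (∑ i ∈ range j, x / (x + i * h))
          - ∑ i ∈ range J, x / (x + i * h)) atTop atTop :=
        tendsto_atTop_add_const_right _ _ (fsc_harmonic h x hh hx)
      refine h1.congr' ?_
      filter_upwards [eventually_ge_atTop J] with j hj
      rw [Finset.sum_Ico_eq_sub _ hj]
    exact Real.tendsto_exp_atBot.comp (tendsto_neg_atBot_iff.2 hS)

lemma fscE_col0 (h : ℝ) : ∀ j, 1 ≤ j → fscE h j 0 = 0 := by
  intro j hj
  match j, hj with
  | 1, _ => simp [fscE]
  | (j+2), _ => have : fscE h (j+1) 0 = 0 := fscE_col0 h (j+1) (by omega)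
                simp only [fscE] at this ⊢
                rw [this, mul_zero]

lemma fsc_decay (h x : ℝ) (hh : 0 < h) (hx : h ≤ x) :
    ∀ m, Tendsto (fun j => fscE h j m / fscP h x j) atTop (nhds 0) := by
  have hx0 : 0 < x := lt_of_lt_of_le hh hx
  intro m
  induction m with
  | zero =>
    refine Tendsto.congr' ?_ tendsto_const_nhds
    filter_upwards [eventually_ge_atTop 1] with j hj
    rw [fscE_col0 h j hj, zero_div]
  | succ m ih =>
    refine fsc_lim (fun j => fscE h j (m+1) / fscP h x j)
      (fun j => j * h / (x + j * h))
      (fun j => fscE h j m / (x * fscP h x j))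
      (fun j => div_nonneg (fscE_nonneg h hh.le j (m+1)) (fscP_pos h x hh.le hx0 j).le)
      (fun j => by positivity)
      (fun j => by
        have hd : (0:ℝ) < x + j * h := by positivity
        rw [div_le_one hd]; linarith)
      (fun j => ?_) ?_ (fsc_prod_tendsto h x hh hx)
    · have hd : (0:ℝ) < x + j * h := by positivity
      have hP := fscP_pos h x hh.le hx0 j
      have h1 : (1:ℝ) - j * h / (x + j * h) = x / (x + j * h) := by field_simp; ring
      rw [h1, fscP_succ]
      simp only [fscE]
      field_simp
      ring
    · have := ih.const_mul (x⁻¹)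
      simp only [mul_zero] at this
      refine this.congr fun j => ?_
      rw [div_mul_eq_div_div_swap, div_div]
      ring_nf

lemma fscP_cast (h x : ℝ) (s : ℕ) :
    ((fscP h x s : ℝ) : ℂ) = ∏ k ∈ Finset.range s, ((x:ℂ) + (k:ℂ) * (h:ℂ)) := by
  rw [fscP]
  push_cast
  rfl

lemma fsc_ratio (h x0 x : ℝ) (hh : 0 < h) (hx0 : 0 < x0) (hx : 3 * x0 + 2 * h ≤ x) :
    ∀ s : ℕ, fscP h x0 (s+1) * (x * (((s:ℝ)+1) * ((s:ℝ)+2))) ≤ fscP h x (s+1) * (2 * x0) := by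
  have hxpos : 0 < x := by linarith
  intro s
  induction s with
  | zero =>
    have e1 : fscP h x0 1 = x0 := by simp [fscP]
    have e2 : fscP h x 1 = x := by simp [fscP]
    rw [e1, e2]; push_cast; nlinarith
  | succ s ih =>
    have hA := fscP_pos h x0 hh.le hx0 (s+1)
    have hB := fscP_pos h x hh.le hxpos (s+1)
    have fact1 : (x0 + ((s:ℝ)+1) * h) * ((s:ℝ)+3) ≤ (x + ((s:ℝ)+1) * h) * ((s:ℝ)+1) := by
      have hs : (0:ℝ) ≤ (s:ℝ) := Nat.cast_nonneg s
      nlinarith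
    have hs1 : (0:ℝ) < (s:ℝ) + 1 := by positivity
    rw [fscP_succ h x0 (s+1), fscP_succ h x (s+1)]
    rw [← mul_le_mul_iff_of_pos_right hs1]
    push_cast
    calc fscP h x0 (s+1) * (x0 + ((s:ℝ)+1) * h) * (x * ((((s:ℝ)+1)+1) * (((s:ℝ)+1)+2))) * ((s:ℝ)+1)
        = (fscP h x0 (s+1) * (x * (((s:ℝ)+1) * ((s:ℝ)+2)))) * ((x0 + ((s:ℝ)+1) * h) * ((s:ℝ)+3)) := by
          ring
      _ ≤ (fscP h x (s+1) * (2 * x0)) * ((x0 + ((s:ℝ)+1) * h) * ((s:ℝ)+3)) := by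
          refine mul_le_mul_of_nonneg_right ih ?_
          have hs : (0:ℝ) ≤ (s:ℝ) := Nat.cast_nonneg s
          positivity
      _ ≤ (fscP h x (s+1) * (2 * x0)) * ((x + ((s:ℝ)+1) * h) * ((s:ℝ)+1)) := by
          refine mul_le_mul_of_nonneg_left fact1 ?_
          positivity
      _ = fscP h x (s+1) * (x + ((s:ℝ)+1) * h) * (2 * x0) * ((s:ℝ)+1) := by ring

lemma fsc_telescope : ∀ N : ℕ, ∑ s ∈ range N, (((s:ℝ)+1) * ((s:ℝ)+2))⁻¹ = 1 - ((N:ℝ)+1)⁻¹ := by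
  intro N
  induction N with
  | zero => simp
  | succ N ih =>
    rw [Finset.sum_range_succ, ih]
    have h1 : ((N:ℝ)+1) ≠ 0 := by positivity
    have h2 : ((N:ℝ)+2) ≠ 0 := by positivity
    push_cast
    field_simp
    ring

lemma fsc_base_summable : Summable (fun s : ℕ => (((s:ℝ)+1) * ((s:ℝ)+2))⁻¹) := by
  refine summable_of_sum_range_le (fun s => by positivity) (fun N => ?_) (c := 1)
  rw [fsc_telescope N]
  have : (0:ℝ) < (N:ℝ)+1 := by positivity
  have : (0:ℝ) ≤ ((N:ℝ)+1)⁻¹ := by positivity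
  linarith

lemma fscC_nonneg (h : ℝ) (hh : 0 ≤ h) (n s : ℕ) : 0 ≤ fscC h n s := by
  rw [fscC]; split
  · exact le_refl 0
  · exact fscE_nonneg h hh _ _

lemma fsc_canonical (h x : ℝ) (hh : 0 < h) (hx : h ≤ x) (n : ℕ) (hn : 1 ≤ n) :
    HasSum (fun s => fscC h n s / fscP h x s) ((x ^ n)⁻¹) := by
  have hx0 : 0 < x := lt_of_lt_of_le hh hx
  have hxn : (0:ℝ) < x ^ n := by positivity
  have hnn : ∀ s, 0 ≤ fscC h n s / fscP h x s := fun s =>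
    div_nonneg (fscC_nonneg h hh.le n s) (fscP_pos h x hh.le hx0 s).le
  have hrho : ∀ j, 0 ≤ (∑ m ∈ range n, fscE h j m * x ^ m) / (x ^ n * fscP h x j) := by
    intro j
    refine div_nonneg (Finset.sum_nonneg fun m _ => ?_) ?_
    · exact mul_nonneg (fscE_nonneg h hh.le j m) (by positivity)
    · exact mul_nonneg hxn.le (fscP_pos h x hh.le hx0 j).le
  have hbound : ∀ N, ∑ s ∈ range N, fscC h n s / fscP h x s ≤ (x ^ n)⁻¹ := by
    intro N
    cases N with
    | zero => simp; positivity
    | succ j =>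
      rw [fsc_partial h x hh.le hx0 n hn j]
      linarith [hrho j]
  have hsummable : Summable (fun s => fscC h n s / fscP h x s) :=
    summable_of_sum_range_le hnn hbound
  have hhs := hsummable.hasSum
  -- identify the sum
  have hT1 : Tendsto (fun j : ℕ => ∑ s ∈ range (j+1), fscC h n s / fscP h x s) atTop
      (nhds (∑' s, fscC h n s / fscP h x s)) :=
    hhs.tendsto_sum_nat.comp (tendsto_add_atTop_nat 1)
  have hrho0 : Tendsto (fun j => (∑ m ∈ range n, fscE h j m * x ^ m) / (x ^ n * fscP h x j))
      atTop (nhds 0) := by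
    have : ∀ j, (∑ m ∈ range n, fscE h j m * x ^ m) / (x ^ n * fscP h x j)
        = ∑ m ∈ range n, (x ^ m / x ^ n) * (fscE h j m / fscP h x j) := by
      intro j
      rw [Finset.sum_div]
      refine Finset.sum_congr rfl fun m _ => ?_
      field_simp
    simp only [this]
    have h0 : (0:ℝ) = ∑ m ∈ range n, (0:ℝ) := by simp
    rw [h0]
    refine tendsto_finset_sum _ fun m _ => ?_
    have := (fsc_decay h x hh hx m).const_mul (x ^ m / x ^ n)
    simpa using this
  have hT2 : Tendsto (fun j : ℕ => ∑ s ∈ range (j+1), fscC h n s / fscP h x s) atTop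
      (nhds ((x ^ n)⁻¹)) := by
    have : ∀ j : ℕ, ∑ s ∈ range (j+1), fscC h n s / fscP h x s
        = (x ^ n)⁻¹ - (∑ m ∈ range n, fscE h j m * x ^ m) / (x ^ n * fscP h x j) :=
      fsc_partial h x hh.le hx0 n hn
    simp only [this]
    have := (tendsto_const_nhds (x := (x ^ n)⁻¹) (f := atTop (α := ℕ))).sub hrho0
    simpa using this
  rwa [tendsto_nhds_unique hT1 hT2] at hhs

lemma fsc_canonicalC (h x : ℝ) (hh : 0 < h) (hx : h ≤ x) (n : ℕ) (hn : 1 ≤ n) :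
    HasSum (fun s => ((fscC h n s : ℝ) : ℂ) * (∏ k ∈ Finset.range s, ((x:ℂ) + (k:ℂ) * (h:ℂ)))⁻¹)
      ((((x:ℂ)) ^ n)⁻¹) := by
  have H := Complex.ofRealCLM.hasSum (fsc_canonical h x hh hx n hn)
  have hfun : (fun s => Complex.ofRealCLM (fscC h n s / fscP h x s))
      = fun s => ((fscC h n s : ℝ) : ℂ) * (∏ k ∈ Finset.range s, ((x:ℂ) + (k:ℂ) * (h:ℂ)))⁻¹ := by
    funext t
    rw [Complex.ofRealCLM_apply, Complex.ofReal_div, div_eq_mul_inv, fscP_cast]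
  have hval : (Complex.ofRealCLM ((x ^ n)⁻¹) : ℂ) = (((x:ℂ)) ^ n)⁻¹ := by
    rw [Complex.ofRealCLM_apply]
    push_cast
    rfl
  rwa [hfun, hval] at H

lemma fsc_L1 (h : ℝ) (hh : 0 < h) (c : ℕ → ℂ) (R' : ℝ)
    (hc : ∀ x : ℝ, R' < x →
      HasSum (fun t => c t * (∏ k ∈ Finset.range t, ((x:ℂ) + (k:ℂ) * (h:ℂ)))⁻¹) 0) :
    c 0 = 0 := by
  set x0 : ℝ := max R' 0 + 1 with hx0def
  have hx0R : R' < x0 := by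
    have := le_max_left R' 0; simp only [hx0def]; linarith
  have hx00 : 0 < x0 := by
    have := le_max_right R' 0; simp only [hx0def]; linarith
  have hs0 := hc x0 hx0R
  -- bound on the coefficients
  have hterm : Tendsto (fun t => ‖c t * (∏ k ∈ Finset.range t, ((x0:ℂ) + (k:ℂ) * (h:ℂ)))⁻¹‖)
      atTop (nhds 0) := by
    have := hs0.summable.tendsto_atTop_zero.norm
    simpa using this
  obtain ⟨A, hA⟩ := hterm.bddAbove_range
  have hA' : ∀ t, ‖c t‖ ≤ A * fscP h x0 t := by
    intro t
    have h1 : ‖c t * (∏ k ∈ Finset.range t, ((x0:ℂ) + (k:ℂ) * (h:ℂ)))⁻¹‖ ≤ A :=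
      hA (Set.mem_range_self t)
    have hP : 0 < fscP h x0 t := fscP_pos h x0 hh.le hx00 t
    rw [norm_mul, norm_inv, ← fscP_cast, Complex.norm_real, Real.norm_eq_abs,
      abs_of_pos hP] at h1
    calc ‖c t‖ = ‖c t‖ * (fscP h x0 t)⁻¹ * fscP h x0 t := by field_simp
      _ ≤ A * fscP h x0 t := mul_le_mul_of_nonneg_right h1 hP.le
  have hA0 : 0 ≤ A := le_trans (norm_nonneg _) (hA' 0 |>.trans_eq (by simp [fscP]))
  -- main estimate
  have hest : ∀ x : ℝ, 3 * x0 + 2 * h ≤ x → ‖c 0‖ ≤ 2 * A * x0 / x := by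
    intro x hx
    have hxpos : 0 < x := by linarith
    have hxR : R' < x := by
      have : x0 ≤ x := by linarith
      linarith
    have hsx := hc x hxR
    have h1 : HasSum (fun t => c (t+1) * (∏ k ∈ Finset.range (t+1), ((x:ℂ) + (k:ℂ) * (h:ℂ)))⁻¹)
        (-(c 0)) := by
      refine (hasSum_nat_add_iff
        (f := fun t => c t * (∏ k ∈ Finset.range t, ((x:ℂ) + (k:ℂ) * (h:ℂ)))⁻¹)
        (g := -(c 0)) 1).mpr ?_
      simpa using hsx
    -- majorant
    have hmaj : ∀ t, ‖c (t+1) * (∏ k ∈ Finset.range (t+1), ((x:ℂ) + (k:ℂ) * (h:ℂ)))⁻¹‖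
        ≤ (2 * A * x0 / x) * (((t:ℝ)+1) * ((t:ℝ)+2))⁻¹ := by
      intro t
      have hP : 0 < fscP h x (t+1) := fscP_pos h x hh.le hxpos (t+1)
      have hP0 : 0 < fscP h x0 (t+1) := fscP_pos h x0 hh.le hx00 (t+1)
      rw [norm_mul, norm_inv, ← fscP_cast, Complex.norm_real, Real.norm_eq_abs, abs_of_pos hP]
      have hr := fsc_ratio h x0 x hh hx00 hx t
      have ht2 : (0:ℝ) < ((t:ℝ)+1) * ((t:ℝ)+2) := by positivity
      calc ‖c (t+1)‖ * (fscP h x (t+1))⁻¹ ≤ (A * fscP h x0 (t+1)) * (fscP h x (t+1))⁻¹ :=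
            mul_le_mul_of_nonneg_right (hA' (t+1)) (by positivity)
        _ ≤ (2 * A * x0 / x) * (((t:ℝ)+1) * ((t:ℝ)+2))⁻¹ := by
            rw [mul_inv_le_iff₀ hP]
            have base : A * (fscP h x0 (t+1) * (x * (((t:ℝ)+1) * ((t:ℝ)+2))))
                ≤ A * (fscP h x (t+1) * (2 * x0)) := mul_le_mul_of_nonneg_left hr hA0
            rw [show (2 * A * x0 / x) * (((t:ℝ)+1) * ((t:ℝ)+2))⁻¹ * fscP h x (t+1)
                = (A * (fscP h x (t+1) * (2 * x0))) / (x * (((t:ℝ)+1) * ((t:ℝ)+2))) from by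
              field_simp]
            rw [le_div_iff₀ (by positivity)]
            calc A * fscP h x0 (t+1) * (x * (((t:ℝ)+1) * ((t:ℝ)+2)))
                = A * (fscP h x0 (t+1) * (x * (((t:ℝ)+1) * ((t:ℝ)+2)))) := by ring
              _ ≤ A * (fscP h x (t+1) * (2 * x0)) := base
    have hsum_maj : Summable (fun t : ℕ => (2 * A * x0 / x) * (((t:ℝ)+1) * ((t:ℝ)+2))⁻¹) :=
      fsc_base_summable.mul_left _
    have hnormsum : Summable (fun t =>
        ‖c (t+1) * (∏ k ∈ Finset.range (t+1), ((x:ℂ) + (k:ℂ) * (h:ℂ)))⁻¹‖) :=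
      Summable.of_nonneg_of_le (fun t => norm_nonneg _) hmaj hsum_maj
    calc ‖c 0‖
        = ‖∑' t, c (t+1) * (∏ k ∈ Finset.range (t+1), ((x:ℂ) + (k:ℂ) * (h:ℂ)))⁻¹‖ := by
          rw [h1.tsum_eq, norm_neg]
      _ ≤ ∑' t, ‖c (t+1) * (∏ k ∈ Finset.range (t+1), ((x:ℂ) + (k:ℂ) * (h:ℂ)))⁻¹‖ :=
          norm_tsum_le_tsum_norm hnormsum
      _ ≤ ∑' t : ℕ, (2 * A * x0 / x) * (((t:ℝ)+1) * ((t:ℝ)+2))⁻¹ :=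
          Summable.tsum_le_tsum hmaj hnormsum hsum_maj
      _ = (2 * A * x0 / x) * ∑' t : ℕ, (((t:ℝ)+1) * ((t:ℝ)+2))⁻¹ := tsum_mul_left
      _ ≤ (2 * A * x0 / x) * 1 := by
          refine mul_le_mul_of_nonneg_left ?_ (by positivity)
          refine Summable.tsum_le_of_sum_range_le fsc_base_summable (fun N => ?_)
          rw [fsc_telescope N]
          have : (0:ℝ) ≤ ((N:ℝ)+1)⁻¹ := by positivity
          linarith
      _ = 2 * A * x0 / x := mul_one _
  -- conclude
  by_contra hne
  have hcpos : 0 < ‖c 0‖ := norm_pos_iff.2 hne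
  set x : ℝ := max (3 * x0 + 2 * h) (2 * A * x0 / (‖c 0‖ / 2)) with hxdef
  have h1 : ‖c 0‖ ≤ 2 * A * x0 / x := hest x (le_max_left _ _)
  have hxpos : 0 < x := lt_of_lt_of_le (by positivity) (le_max_left _ _)
  have h2 : 2 * A * x0 / x ≤ ‖c 0‖ / 2 := by
    rw [div_le_iff₀ hxpos]
    have h3 : 2 * A * x0 / (‖c 0‖ / 2) ≤ x := le_max_right _ _
    rw [div_le_iff₀ (by positivity)] at h3
    linarith
  linarith

lemma fsc_L2 (h : ℝ) (hh : 0 < h) : ∀ (s : ℕ) (c : ℕ → ℂ) (R' : ℝ),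
    (∀ x : ℝ, R' < x →
      HasSum (fun t => c t * (∏ k ∈ Finset.range t, ((x:ℂ) + (k:ℂ) * (h:ℂ)))⁻¹) 0) →
    c s = 0 := by
  intro s
  induction s with
  | zero => exact fun c R' hc => fsc_L1 h hh c R' hc
  | succ s ih =>
    intro c R' hc
    have h0 : c 0 = 0 := fsc_L1 h hh c R' hc
    refine ih (fun t => c (t+1)) (max R' 0 + h) (fun x hx => ?_)
    have hy : R' < x - h := by
      have := le_max_left R' 0
      linarith
    have hy0 : 0 < x - h := by
      have := le_max_right R' 0
      linarith
    have hsy := hc (x - h) hy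
    have h1 : HasSum (fun t => c (t+1) *
        (∏ k ∈ Finset.range (t+1), (((x - h : ℝ):ℂ) + (k:ℂ) * (h:ℂ)))⁻¹) (-(c 0)) := by
      refine (hasSum_nat_add_iff
        (f := fun t => c t * (∏ k ∈ Finset.range t, (((x - h : ℝ):ℂ) + (k:ℂ) * (h:ℂ)))⁻¹)
        (g := -(c 0)) 1).mpr ?_
      simpa using hsy
    rw [h0, neg_zero] at h1
    have h2 : ∀ t : ℕ, (∏ k ∈ Finset.range (t+1), (((x - h : ℝ):ℂ) + (k:ℂ) * (h:ℂ)))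
        = ((x - h : ℝ):ℂ) * ∏ k ∈ Finset.range t, ((x:ℂ) + (k:ℂ) * (h:ℂ)) := by
      intro t
      rw [Finset.prod_range_succ' (fun k => (((x - h : ℝ):ℂ) + (k:ℂ) * (h:ℂ)))]
      rw [mul_comm]
      congr 1
      · push_cast
        ring
      · refine Finset.prod_congr rfl fun k _ => ?_
        push_cast
        ring
    have hyne : ((x - h : ℝ):ℂ) ≠ 0 := by
      exact Complex.ofReal_ne_zero.mpr (ne_of_gt hy0)
    have h3 : HasSum (fun t => (c (t+1) *
        (∏ k ∈ Finset.range t, ((x:ℂ) + (k:ℂ) * (h:ℂ)))⁻¹) * (((x - h : ℝ):ℂ))⁻¹) 0 := by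
      refine h1.congr_fun fun t => ?_
      rw [h2 t, mul_inv]
      ring
    have h4 := h3.mul_right (((x - h : ℝ):ℂ))
    rw [zero_mul] at h4
    refine h4.congr_fun fun t => ?_
    rw [mul_assoc, inv_mul_cancel₀ hyne, mul_one]

theorem factorial_series_coeffs_sum
    (h : ℝ) (hh : 0 < h) (ψ : ℕ → ℕ → ℂ) (R : ℝ)
    (hexp : ∀ n : ℕ, ∀ x : ℂ, R < x.re →
      HasSum (fun s : ℕ => ψ n s * (∏ k ∈ Finset.range s, (x + (k : ℂ) * (h : ℂ)))⁻¹)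
        ((x ^ n)⁻¹))
    (α : ℝ) (hα : 0 < α) (s : ℕ) (hs : 1 ≤ s) :
    HasSum (fun k : ℕ => ψ (k + 1) s * (α : ℂ) ^ k)
      (∏ j ∈ Finset.range (s - 1), ((α : ℂ) + (j : ℂ) * (h : ℂ))) := by
  have hid : ∀ n : ℕ, 1 ≤ n → ∀ t : ℕ, ψ n t = ((fscC h n t : ℝ) : ℂ) := by
    intro n hn t
    have key := fsc_L2 h hh t (fun u => ψ n u - ((fscC h n u : ℝ):ℂ)) (max R h) ?_
    · exact sub_eq_zero.mp key
    · intro x hx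
      have hxR : R < ((x:ℂ)).re := by
        simpa using lt_of_le_of_lt (le_max_left R h) hx
      have hxh : h ≤ x := le_of_lt (lt_of_le_of_lt (le_max_right R h) hx)
      have H1 := hexp n (x:ℂ) hxR
      have H2 := fsc_canonicalC h x hh hxh n hn
      have H3 := H1.sub H2
      rw [sub_self] at H3
      refine H3.congr_fun fun u => ?_
      ring
  have hsne : s ≠ 0 := by omega
  have hzero : ∀ k ∉ Finset.range s, ψ (k + 1) s * (α:ℂ) ^ k = 0 := by
    intro k hk
    rw [Finset.mem_range, not_lt] at hk
    rw [hid (k+1) (by omega) s]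
    have hE : fscE h (s-1) k = 0 := fscE_eq_zero h (s-1) k (by omega)
    simp [fscC, hsne, hE]
  have H : HasSum (fun k : ℕ => ψ (k + 1) s * (α:ℂ) ^ k)
      (∑ k ∈ Finset.range s, ψ (k + 1) s * (α:ℂ) ^ k) := hasSum_sum_of_ne_finset_zero hzero
  have hval : ∑ k ∈ Finset.range s, ψ (k + 1) s * (α:ℂ) ^ k
      = ∏ j ∈ Finset.range (s - 1), ((α : ℂ) + (j : ℂ) * (h : ℂ)) := by
    have e1 : ∀ k, ψ (k + 1) s = ((fscE h (s-1) k : ℝ) : ℂ) := by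
      intro k
      rw [hid (k+1) (by omega) s]
      simp [fscC, hsne]
    calc ∑ k ∈ Finset.range s, ψ (k + 1) s * (α:ℂ) ^ k
        = ∑ k ∈ Finset.range s, ((fscE h (s-1) k : ℝ):ℂ) * ((α:ℝ):ℂ) ^ k := by
          refine Finset.sum_congr rfl fun k _ => by rw [e1 k]
      _ = (((∑ k ∈ Finset.range ((s-1)+1), fscE h (s-1) k * α ^ k : ℝ)) : ℂ) := by
          rw [show (s-1)+1 = s from by omega]
          push_cast
          rfl
      _ = ((((∏ m ∈ Finset.range (s-1), (α + m * h) : ℝ))) : ℂ) := by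
          rw [fscE_poly h (s-1) α]
      _ = ∏ j ∈ Finset.range (s - 1), ((α : ℂ) + (j : ℂ) * (h : ℂ)) := by
          push_cast
          rfl
  rwa [hval] at H
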